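/- Let σ be the automorphism of the free group F = ⟨α, β⟩ given by σ(α) = αβα^{-1}, σ(β) = α. Then for every m ≥ 0 and every group G generated by two elements a, b, the induced endomorphism σ^m descends to the identity on G (i.e., σ^m(α) ↦ a and σ^m(β) ↦ b) if and only if {a,b}_m = 1 in G, where {a,b}_{2k} = (ab)^k(ba)^{-k} and {a,b}_{2k+1} = ((ab)^k a)((ba)^k b)^{-1}. -/

import Mathlib

/-- The bracket `{a,b}_m`. -/
def degtBracket {G : Type*} [Group G] (m : ℕ) (a b : G) : G :=
  if m % 2 = 0 then (a * b) ^ (m / 2) * ((b * a) ^ (m / 2))⁻¹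
  else ((a * b) ^ (m / 2) * a) * ((b * a) ^ (m / 2) * b)⁻¹

/-- The Artin generator `σ` of `B₂` acting on the free group `⟨α, β⟩`:
`σ(α) = αβα⁻¹`, `σ(β) = α`. -/
def artinSigma : Monoid.End (FreeGroup (Fin 2)) :=
  FreeGroup.lift fun i =>
    if i = (0 : Fin 2) then FreeGroup.of 0 * FreeGroup.of 1 * (FreeGroup.of 0)⁻¹
    else FreeGroup.of (0 : Fin 2)

private lemma sc1 {G : Type*} [Group G] (a b : G) (k : ℕ) :
    a * (b * a) ^ k = (a * b) ^ k * a :=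
  SemiconjBy.pow_right (by simp [SemiconjBy, mul_assoc]) k

private lemma artin0 :
    artinSigma (FreeGroup.of 0) = FreeGroup.of 0 * FreeGroup.of 1 * (FreeGroup.of 0)⁻¹ := by
  show (FreeGroup.lift _ : FreeGroup (Fin 2) →* FreeGroup (Fin 2)) (FreeGroup.of 0) = _
  rw [FreeGroup.lift_apply_of]; simp

private lemma artin1 : artinSigma (FreeGroup.of 1) = FreeGroup.of 0 := by
  show (FreeGroup.lift _ : FreeGroup (Fin 2) →* FreeGroup (Fin 2)) (FreeGroup.of 1) = _
  rw [FreeGroup.lift_apply_of]; simp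

private lemma pow_step (m : ℕ) (x : FreeGroup (Fin 2)) :
    (artinSigma ^ (m + 1)) x = (artinSigma ^ m) (artinSigma x) := by
  rw [pow_succ]; rfl

/-- Closed form for the images of the generators under `σ^{2k}` followed by the
evaluation map. -/
private lemma closed_form {G : Type*} [Group G] (a b : G) (k : ℕ) :
    FreeGroup.lift (fun i : Fin 2 => if i = 0 then a else b)
        ((artinSigma ^ (2 * k)) (FreeGroup.of 0)) = (a * b) ^ k * a * ((a * b) ^ k)⁻¹ ∧
    FreeGroup.lift (fun i : Fin 2 => if i = 0 then a else b)
        ((artinSigma ^ (2 * k)) (FreeGroup.of 1)) = (a * b) ^ k * b * ((a * b) ^ k)⁻¹ := by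
  set φ := FreeGroup.lift (fun i : Fin 2 => if i = 0 then a else b) with hφ
  induction k with
  | zero =>
    constructor <;> simp [hφ, FreeGroup.lift_apply_of]
  | succ n ih =>
    obtain ⟨h0, h1⟩ := ih
    have e0 : (2 * (n + 1)) = (2 * n + 1) + 1 := by ring
    -- one step
    have s0 : ∀ j : ℕ, φ ((artinSigma ^ (j + 1)) (FreeGroup.of 0)) =
        φ ((artinSigma ^ j) (FreeGroup.of 0)) * φ ((artinSigma ^ j) (FreeGroup.of 1)) *
          (φ ((artinSigma ^ j) (FreeGroup.of 0)))⁻¹ := by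
      intro j
      rw [pow_step, artin0, map_mul, map_mul, map_inv, map_mul, map_mul, map_inv]
    have s1 : ∀ j : ℕ, φ ((artinSigma ^ (j + 1)) (FreeGroup.of 1)) =
        φ ((artinSigma ^ j) (FreeGroup.of 0)) := by
      intro j
      rw [pow_step, artin1]
    -- values at 2n+1
    have h0' : φ ((artinSigma ^ (2 * n + 1)) (FreeGroup.of 0)) =
        ((a * b) ^ n * a) * b * ((a * b) ^ n * a)⁻¹ := by
      rw [s0, h0, h1]; group
    have h1' : φ ((artinSigma ^ (2 * n + 1)) (FreeGroup.of 1)) =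
        ((a * b) ^ n * a) * a * ((a * b) ^ n * a)⁻¹ := by
      rw [s1, h0]; group
    constructor
    · rw [e0, s0, h0', h1']
      have : (a * b) ^ (n + 1) = (a * b) ^ n * a * b := by rw [pow_succ]; group
      rw [this]; group
    · rw [e0, s1, h0']
      have : (a * b) ^ (n + 1) = (a * b) ^ n * a * b := by rw [pow_succ]; group
      rw [this]; group

/-- `σ^m` descends to the identity on a two-generated group `G` (sending
`σ^m(α) ↦ a`, `σ^m(β) ↦ b`) iff `{a,b}_m = 1` in `G`. -/
theorem sigma_pow_descends_iff_bracket (m : ℕ) {G : Type*} [Group G] (a b : G)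
    (hgen : Subgroup.closure ({a, b} : Set G) = ⊤) :
    (FreeGroup.lift (fun i : Fin 2 => if i = 0 then a else b)
        ((artinSigma ^ m) (FreeGroup.of 0)) = a ∧
     FreeGroup.lift (fun i : Fin 2 => if i = 0 then a else b)
        ((artinSigma ^ m) (FreeGroup.of 1)) = b) ↔
    degtBracket m a b = 1 := by
  set φ := FreeGroup.lift (fun i : Fin 2 => if i = 0 then a else b) with hφ
  rcases Nat.even_or_odd m with ⟨k, hk⟩ | ⟨k, hk⟩
  · -- m = 2k
    have hm : m = 2 * k := by omega
    subst hm
    obtain ⟨h0, h1⟩ := closed_form a b k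
    have hb : degtBracket (2 * k) a b = (a * b) ^ k * ((b * a) ^ k)⁻¹ := by
      have : (2 * k) % 2 = 0 := by omega
      rw [degtBracket, if_pos this, Nat.mul_div_cancel_left k (by norm_num)]
    rw [h0, h1, hb]
    constructor
    · rintro ⟨e1, _⟩
      have hcom : (a * b) ^ k * a = a * (a * b) ^ k := by
        calc (a * b) ^ k * a = (a * b) ^ k * a * ((a * b) ^ k)⁻¹ * (a * b) ^ k := by group
        _ = a * (a * b) ^ k := by rw [e1]
      have : (b * a) ^ k = (a * b) ^ k := by
        have h := sc1 a b k
        calc (b * a) ^ k = a⁻¹ * (a * (b * a) ^ k) := by group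
        _ = a⁻¹ * ((a * b) ^ k * a) := by rw [h]
        _ = a⁻¹ * (a * (a * b) ^ k) := by rw [hcom]
        _ = (a * b) ^ k := by group
      rw [this]; group
    · intro h
      have heq : (a * b) ^ k = (b * a) ^ k := by
        calc (a * b) ^ k = (a * b) ^ k * ((b * a) ^ k)⁻¹ * (b * a) ^ k := by group
        _ = (b * a) ^ k := by rw [h]; group
      constructor
      · calc (a * b) ^ k * a * ((a * b) ^ k)⁻¹
            = a * ((b * a) ^ k * ((a * b) ^ k)⁻¹) := by rw [← sc1 a b k]; group
        _ = a := by rw [← heq]; group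
      · calc (a * b) ^ k * b * ((a * b) ^ k)⁻¹
            = (b * a) ^ k * b * ((a * b) ^ k)⁻¹ := by rw [heq]
        _ = b * ((a * b) ^ k * ((a * b) ^ k)⁻¹) := by rw [← sc1 b a k]; group
        _ = b := by group
  · -- m = 2k + 1
    have hm : m = 2 * k + 1 := by omega
    subst hm
    obtain ⟨h0, h1⟩ := closed_form a b k
    have s0 : φ ((artinSigma ^ (2 * k + 1)) (FreeGroup.of 0)) =
        φ ((artinSigma ^ (2 * k)) (FreeGroup.of 0)) *
          φ ((artinSigma ^ (2 * k)) (FreeGroup.of 1)) *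
          (φ ((artinSigma ^ (2 * k)) (FreeGroup.of 0)))⁻¹ := by
      rw [pow_step, artin0, map_mul, map_mul, map_inv, map_mul, map_mul, map_inv]
    have s1 : φ ((artinSigma ^ (2 * k + 1)) (FreeGroup.of 1)) =
        ((a * b) ^ k * a) * a * ((a * b) ^ k * a)⁻¹ := by
      rw [pow_step, artin1, h0]; group
    have s0' : φ ((artinSigma ^ (2 * k + 1)) (FreeGroup.of 0)) =
        ((a * b) ^ k * a) * b * ((a * b) ^ k * a)⁻¹ := by
      rw [s0, h0, h1]; group
    have hb : degtBracket (2 * k + 1) a b = ((a * b) ^ k * a) * ((b * a) ^ k * b)⁻¹ := by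
      have h2 : (2 * k + 1) % 2 = 1 := by omega
      have h3 : (2 * k + 1) / 2 = k := by omega
      rw [degtBracket, if_neg (by omega), h3]
    rw [s0', s1, hb]
    set w : G := (a * b) ^ k * a with hw
    constructor
    · rintro ⟨_, e2⟩
      -- e2 : w * a * w⁻¹ = b
      have hwa : w * a = b * w := by
        calc w * a = (w * a * w⁻¹) * w := by group
        _ = b * w := by rw [e2]
      have hbw : b * w = (b * a) ^ k * b * a := by
        rw [hw, ← mul_assoc, sc1 b a k]; try group
      have : w = (b * a) ^ k * b := by
        have h4 : w * a = (b * a) ^ k * b * a := by rw [hwa, hbw]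
        calc w = w * a * a⁻¹ := by group
        _ = (b * a) ^ k * b * a * a⁻¹ := by rw [h4]
        _ = (b * a) ^ k * b := by group
      rw [this]; group
    · intro h
      have hwe : w = (b * a) ^ k * b := by
        calc w = (w * ((b * a) ^ k * b)⁻¹) * ((b * a) ^ k * b) := by group
        _ = (b * a) ^ k * b := by rw [h]; group
      constructor
      · -- w * b * w⁻¹ = a
        have : w * b = a * w := by
          calc w * b = (a * b) ^ k * (a * b) := by rw [hw]; group
          _ = (a * b) * (a * b) ^ k := by rw [← pow_succ, ← pow_succ']
          _ = a * ((b * a) ^ k * b) := by rw [← sc1 b a k]; group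
          _ = a * w := by rw [← hwe]
        calc w * b * w⁻¹ = (w * b) * w⁻¹ := by group
        _ = a * w * w⁻¹ := by rw [this]
        _ = a := by group
      · -- w * a * w⁻¹ = b
        have : w * a = b * w := by
          calc w * a = (b * a) ^ k * (b * a) := by rw [hwe]; group
          _ = (b * a) * (b * a) ^ k := by rw [← pow_succ, ← pow_succ']
          _ = b * ((a * b) ^ k * a) := by rw [← sc1 a b k]; group
          _ = b * w := by rw [← hw]
        calc w * a * w⁻¹ = (w * a) * w⁻¹ := by group
        _ = b * w * w⁻¹ := by rw [this]
        _ = b := by group
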